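/- Entropy decomposition via copula entropy: under the same assumptions, the joint differential entropy satisfies H(X,Y) = H(X) + H(Y) + H_c(X,Y), where H(X,Y) = -∫∫ f log f, H(X) = -∫ f_X log f_X, H(Y) = -∫ f_Y log f_Y, and H_c(X,Y) = -∫∫_{[0,1]²} c log c. -/

import Mathlib

open MeasureTheory Set Filter Topology
open scoped ENNReal NNReal

lemma cdf_map_eq (fX FX : ℝ → ℝ) (hnn : ∀ x, 0 ≤ fX x)
    (hint : Integrable fX) (hsum : ∫ x, fX x = 1)
    (hFX : ∀ x, FX x = ∫ t in Iic x, fX t)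
    (hc : Continuous FX) (hm : StrictMono FX) :
    (volume.withDensity (fun x => ENNReal.ofReal (fX x))).map FX
      = volume.restrict (Ioo (0:ℝ) 1) := by
  set ν := volume.withDensity (fun x => ENNReal.ofReal (fX x)) with hν
  have hIic : ∀ x, ν (Iic x) = ENNReal.ofReal (FX x) := by
    intro x
    rw [hν, withDensity_apply _ measurableSet_Iic,
      ← ofReal_integral_eq_lintegral_ofReal hint.integrableOn
        (Eventually.of_forall hnn), ← hFX x]
  have huniv : ν univ = 1 := by
    rw [hν, withDensity_apply _ MeasurableSet.univ, Measure.restrict_univ,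
      ← ofReal_integral_eq_lintegral_ofReal hint (Eventually.of_forall hnn), hsum,
      ENNReal.ofReal_one]
  haveI hfin : IsFiniteMeasure ν := ⟨by rw [huniv]; exact ENNReal.one_lt_top⟩
  have h0 : ∀ x, 0 < FX x := by
    intro x
    have h1 : 0 ≤ FX (x - 1) := by
      rw [hFX]; exact setIntegral_nonneg measurableSet_Iic fun t _ => hnn t
    exact lt_of_le_of_lt h1 (hm (by linarith))
  have h1 : ∀ x, FX x < 1 := by
    intro x
    have h2 : FX (x + 1) ≤ 1 := by
      rw [hFX, ← hsum]
      exact setIntegral_le_integral hint (Eventually.of_forall hnn)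
    exact lt_of_lt_of_le (hm (lt_add_one x)) h2
  have htop : Tendsto (fun x => ν (Iic x)) atTop (𝓝 1) := huniv ▸ tendsto_measure_Iic_atTop ν
  have hbot : Tendsto (fun x : ℝ => ν (Iic x)) atBot (𝓝 0) := by
    have hempty : ⋂ x : ℝ, Iic x = (∅ : Set ℝ) := by
      refine iInter_Iic_eq_empty_iff.mpr ?_
      rintro ⟨b, hb⟩
      have := hb (mem_range_self (b - 1))
      linarith
    have h := tendsto_measure_iInter_atBot (μ := ν) (s := fun x : ℝ => Iic x)
      (fun _ => measurableSet_Iic.nullMeasurableSet)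
      (fun a b hab => Iic_subset_Iic.2 hab) ⟨0, measure_ne_top ν _⟩
    rw [hempty] at h
    simpa [Function.comp_def] using h
  haveI : IsFiniteMeasure (ν.map FX) :=
    ⟨by rw [Measure.map_apply hc.measurable MeasurableSet.univ]; simp [huniv]⟩
  refine Measure.ext_of_Iic _ _ fun a => ?_
  rw [Measure.map_apply hc.measurable measurableSet_Iic,
    Measure.restrict_apply measurableSet_Iic]
  rcases le_or_gt a 0 with ha | ha
  · have hp : FX ⁻¹' Iic a = ∅ :=
      eq_empty_iff_forall_notMem.2 fun x hx => absurd (le_trans hx ha) (h0 x).not_ge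
    have hi : Iic a ∩ Ioo (0:ℝ) 1 = ∅ :=
      eq_empty_iff_forall_notMem.2 fun x hx => absurd (le_trans hx.1 ha) hx.2.1.not_ge
    simp [hp, hi]
  rcases le_or_gt 1 a with ha1 | ha1
  · have hp : FX ⁻¹' Iic a = univ :=
      eq_univ_of_forall fun x => le_trans (h1 x).le ha1
    have hi : Iic a ∩ Ioo (0:ℝ) 1 = Ioo 0 1 :=
      inter_eq_right.2 fun x hx => le_trans hx.2.le ha1
    rw [hp, hi, huniv, Real.volume_Ioo]
    simp
  · obtain ⟨x₀, hx₀⟩ := (hbot.eventually_lt_const (ENNReal.ofReal_pos.2 ha)).exists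
    rw [hIic] at hx₀
    have hx₀' : FX x₀ < a := by
      by_contra h
      exact absurd (ENNReal.ofReal_le_ofReal (not_lt.1 h)) hx₀.not_ge
    obtain ⟨x₁, hx₁⟩ := (htop.eventually_const_lt (ENNReal.ofReal_lt_one.2 ha1)).exists
    rw [hIic] at hx₁
    have hx₁' : a < FX x₁ := by
      by_contra h
      exact absurd (ENNReal.ofReal_le_ofReal (not_lt.1 h)) hx₁.not_ge
    have hx01 : x₀ ≤ x₁ := (hm.lt_iff_lt.1 (hx₀'.trans hx₁')).le
    obtain ⟨b, -, hb⟩ := intermediate_value_Icc hx01 hc.continuousOn ⟨hx₀'.le, hx₁'.le⟩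
    have hpre : FX ⁻¹' Iic a = Iic b := by
      ext x
      simp only [mem_preimage, mem_Iic, ← hb, hm.le_iff_le]
    have hinter : Iic a ∩ Ioo (0:ℝ) 1 = Ioc 0 a := by
      ext x
      constructor
      · rintro ⟨hx1, hx2, _⟩; exact ⟨hx2, hx1⟩
      · rintro ⟨hx1, hx2⟩; exact ⟨hx2, hx1, lt_of_le_of_lt hx2 ha1⟩
    rw [hpre, hinter, hIic, hb, Real.volume_Ioc]
    simp

lemma withDensity_prod_aux (g₁ g₂ : ℝ → ℝ≥0∞) (h₁ : Measurable g₁) (h₂ : Measurable g₂)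
    [SigmaFinite (volume.withDensity g₁)] [SigmaFinite (volume.withDensity g₂)] :
    (volume.withDensity g₁).prod (volume.withDensity g₂)
      = ((volume : Measure ℝ).prod volume).withDensity (fun p => g₁ p.1 * g₂ p.2) := by
  refine Measure.prod_eq fun s t hs ht => ?_
  rw [withDensity_apply _ (hs.prod ht), ← Measure.prod_restrict,
    lintegral_prod_mul h₁.aemeasurable h₂.aemeasurable,
    withDensity_apply _ hs, withDensity_apply _ ht]

/-- Entropy decomposition via copula entropy:
`H(X,Y) = H(X) + H(Y) + H_c(X,Y)`. -/
theorem entropy_decomposition_copula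
    (f : ℝ × ℝ → ℝ) (fX fY FX FY : ℝ → ℝ) (c : ℝ × ℝ → ℝ)
    (hf_nonneg : ∀ p, 0 ≤ f p) (hfX_nonneg : ∀ x, 0 ≤ fX x)
    (hfY_nonneg : ∀ y, 0 ≤ fY y) (hc_nonneg : ∀ u, 0 ≤ c u)
    (hf_meas : Measurable f) (hc_meas : Measurable c)
    (hf_prob : ∫ p, f p = 1)
    (hmargX : ∀ x, fX x = ∫ y, f (x, y)) (hmargY : ∀ y, fY y = ∫ x, f (x, y))
    (hFX : ∀ x, FX x = ∫ t in Iic x, fX t) (hFY : ∀ y, FY y = ∫ t in Iic y, fY t)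
    (hFXc : Continuous FX) (hFYc : Continuous FY)
    (hFXm : StrictMono FX) (hFYm : StrictMono FY)
    (hfac : ∀ᵐ p : ℝ × ℝ, f p = c (FX p.1, FY p.2) * fX p.1 * fY p.2)
    (hintf : Integrable (fun p : ℝ × ℝ => f p * Real.log (f p)))
    (hintfX : Integrable (fun x : ℝ => fX x * Real.log (fX x)))
    (hintfY : Integrable (fun y : ℝ => fY y * Real.log (fY y)))
    (hintc : IntegrableOn (fun u : ℝ × ℝ => c u * Real.log (c u))
      (Icc (0:ℝ) 1 ×ˢ Icc (0:ℝ) 1)) :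
    -(∫ p : ℝ × ℝ, f p * Real.log (f p))
      = -(∫ x : ℝ, fX x * Real.log (fX x)) + -(∫ y : ℝ, fY y * Real.log (fY y))
        + -(∫ u in Icc (0:ℝ) 1 ×ˢ Icc (0:ℝ) 1, c u * Real.log (c u)) := by
  rw [Measure.volume_eq_prod] at hf_prob hfac hintf hintc ⊢
  -- basic facts
  have hfint : Integrable f (volume.prod volume) := by
    by_contra h
    rw [integral_undef h] at hf_prob
    exact zero_ne_one hf_prob
  have hfX_eq : fX = fun x => ∫ y, f (x, y) := funext hmargX
  have hfY_eq : fY = fun y => ∫ x, f (x, y) := funext hmargY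
  have hfX_meas : Measurable fX := by
    rw [hfX_eq]; exact hf_meas.stronglyMeasurable.integral_prod_right'.measurable
  have hfY_meas : Measurable fY := by
    rw [hfY_eq]; exact hf_meas.stronglyMeasurable.integral_prod_left'.measurable
  have hfX_int : Integrable fX := by rw [hfX_eq]; exact hfint.integral_prod_left
  have hfY_int : Integrable fY := by rw [hfY_eq]; exact hfint.integral_prod_right
  have hfX_sum : ∫ x, fX x = 1 := by
    rw [hfX_eq, ← integral_prod f hfint, hf_prob]
  have hfY_sum : ∫ y, fY y = 1 := by
    rw [hfY_eq, ← integral_prod_symm f hfint, hf_prob]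
  -- the three pieces
  set A : ℝ × ℝ → ℝ := fun p => f p * Real.log (c (FX p.1, FY p.2)) with hA
  set B : ℝ × ℝ → ℝ := fun p => f p * Real.log (fX p.1) with hB
  set C : ℝ × ℝ → ℝ := fun p => f p * Real.log (fY p.2) with hC
  have hB_meas : Measurable B :=
    hf_meas.mul ((Real.measurable_log.comp hfX_meas).comp measurable_fst)
  have hC_meas : Measurable C :=
    hf_meas.mul ((Real.measurable_log.comp hfY_meas).comp measurable_snd)
  have hB_norm : (fun x => ∫ y, ‖f (x, y) * Real.log (fX x)‖)
      = fun x => ‖fX x * Real.log (fX x)‖ := by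
    funext x
    have : ∀ y : ℝ, ‖f (x, y) * Real.log (fX x)‖ = f (x, y) * |Real.log (fX x)| := by
      intro y
      rw [Real.norm_eq_abs, abs_mul, abs_of_nonneg (hf_nonneg _)]
    simp_rw [this]
    rw [integral_mul_const, ← hmargX x, Real.norm_eq_abs, abs_mul,
      abs_of_nonneg (hfX_nonneg x)]
  have hC_norm : (fun y => ∫ x, ‖f (x, y) * Real.log (fY y)‖)
      = fun y => ‖fY y * Real.log (fY y)‖ := by
    funext y
    have : ∀ x : ℝ, ‖f (x, y) * Real.log (fY y)‖ = f (x, y) * |Real.log (fY y)| := by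
      intro x
      rw [Real.norm_eq_abs, abs_mul, abs_of_nonneg (hf_nonneg _)]
    simp_rw [this]
    rw [integral_mul_const, ← hmargY y, Real.norm_eq_abs, abs_mul,
      abs_of_nonneg (hfY_nonneg y)]
  have hB_int : Integrable B (volume.prod volume) := by
    refine (integrable_prod_iff hB_meas.aestronglyMeasurable).2 ⟨?_, ?_⟩
    · exact hfint.prod_right_ae.mono fun x hx => by
        simpa [hB] using hx.mul_const (Real.log (fX x))
    · rw [hB_norm]; exact hintfX.norm
  have hC_int : Integrable C (volume.prod volume) := by
    refine (integrable_prod_iff' hC_meas.aestronglyMeasurable).2 ⟨?_, ?_⟩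
    · exact hfint.prod_left_ae.mono fun y hy => by
        simpa [hC] using hy.mul_const (Real.log (fY y))
    · rw [hC_norm]; exact hintfY.norm
  have hB_val : ∫ p, B p ∂(volume.prod volume) = ∫ x, fX x * Real.log (fX x) := by
    rw [integral_prod _ hB_int]
    congr 1
    funext x
    simp only [hB]
    rw [integral_mul_const, ← hmargX x]
  have hC_val : ∫ p, C p ∂(volume.prod volume) = ∫ y, fY y * Real.log (fY y) := by
    rw [integral_prod_symm _ hC_int]
    congr 1
    funext y
    simp only [hC]
    rw [integral_mul_const, ← hmargY y]
  -- splitting of f log f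
  have hsplit : ∀ᵐ p ∂(volume.prod volume),
      f p * Real.log (f p) = A p + B p + C p := by
    refine hfac.mono fun p hp => ?_
    by_cases hfp : f p = 0
    · simp [hA, hB, hC, hfp]
    · have h1 : c (FX p.1, FY p.2) ≠ 0 := by
        intro h; rw [h] at hp; exact hfp (by rw [hp]; ring)
      have h2 : fX p.1 ≠ 0 := by
        intro h; rw [h] at hp; exact hfp (by rw [hp]; ring)
      have h3 : fY p.2 ≠ 0 := by
        intro h; rw [h] at hp; exact hfp (by rw [hp]; ring)
      simp only [hA, hB, hC]
      rw [hp, Real.log_mul (mul_ne_zero h1 h2) h3, Real.log_mul h1 h2]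
      ring
  have hA_int : Integrable A (volume.prod volume) := by
    have heq : (fun p => f p * Real.log (f p) - B p - C p) =ᵐ[volume.prod volume] A := by
      filter_upwards [hsplit] with p hp
      linarith
    exact ((hintf.sub hB_int).sub hC_int).congr heq
  have hsum_val : ∫ p, f p * Real.log (f p) ∂(volume.prod volume)
      = ∫ p, A p ∂(volume.prod volume) + ∫ p, B p ∂(volume.prod volume)
        + ∫ p, C p ∂(volume.prod volume) :=
    calc ∫ p, f p * Real.log (f p) ∂(volume.prod volume)
        = ∫ p, A p + B p + C p ∂(volume.prod volume) := integral_congr_ae hsplit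
      _ = (∫ p, A p + B p ∂(volume.prod volume)) + ∫ p, C p ∂(volume.prod volume) :=
          integral_add (hA_int.add hB_int) hC_int
      _ = _ := by rw [integral_add hA_int hB_int]
  -- transport A to the copula entropy
  set gc : ℝ × ℝ → ℝ := fun u => c u * Real.log (c u) with hgc
  have hgc_meas : Measurable gc := hc_meas.mul (Real.measurable_log.comp hc_meas)
  set F : ℝ × ℝ → ℝ × ℝ := Prod.map FX FY with hF
  have hF_meas : Measurable F := Measurable.prodMap hFXc.measurable hFYc.measurable
  have hA2 : A =ᵐ[volume.prod volume]
      fun p => gc (F p) * (fX p.1 * fY p.2) := by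
    refine hfac.mono fun p hp => ?_
    obtain ⟨x, y⟩ := p
    simp only [hA, hgc, hF, Prod.map_apply] at hp ⊢
    rw [hp]; ring
  set w : ℝ × ℝ → ℝ≥0 := fun p => Real.toNNReal (fX p.1 * fY p.2) with hw
  have hw_meas : Measurable w :=
    measurable_real_toNNReal.comp
      ((hfX_meas.comp measurable_fst).mul (hfY_meas.comp measurable_snd))
  set W : Measure (ℝ × ℝ) :=
    (volume.prod volume).withDensity (fun p => (w p : ℝ≥0∞)) with hW
  have step2 : ∫ p, gc (F p) * (fX p.1 * fY p.2) ∂(volume.prod volume)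
      = ∫ p, gc (F p) ∂W := by
    rw [hW, integral_withDensity_eq_integral_smul hw_meas]
    congr 1
    funext p
    rw [hw]
    simp only [NNReal.smul_def, smul_eq_mul]
    rw [Real.coe_toNNReal _ (mul_nonneg (hfX_nonneg _) (hfY_nonneg _)), mul_comm]
  -- measure identification
  set vX : Measure ℝ := volume.withDensity (fun x => ENNReal.ofReal (fX x)) with hvX
  set vY : Measure ℝ := volume.withDensity (fun y => ENNReal.ofReal (fY y)) with hvY
  haveI : IsFiniteMeasure vX := by
    constructor
    rw [hvX, withDensity_apply _ MeasurableSet.univ, Measure.restrict_univ,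
      ← ofReal_integral_eq_lintegral_ofReal hfX_int (Eventually.of_forall hfX_nonneg),
      hfX_sum]
    simp
  haveI : IsFiniteMeasure vY := by
    constructor
    rw [hvY, withDensity_apply _ MeasurableSet.univ, Measure.restrict_univ,
      ← ofReal_integral_eq_lintegral_ofReal hfY_int (Eventually.of_forall hfY_nonneg),
      hfY_sum]
    simp
  have hWprod : W = vX.prod vY := by
    rw [hvX, hvY, withDensity_prod_aux _ _
      (show Measurable fun x => ENNReal.ofReal (fX x) from ENNReal.measurable_ofReal.comp hfX_meas)
      (show Measurable fun y => ENNReal.ofReal (fY y) from ENNReal.measurable_ofReal.comp hfY_meas)]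
    rw [hW]
    congr 1
    funext p
    rw [hw]
    show ENNReal.ofReal (fX p.1 * fY p.2) = _
    rw [ENNReal.ofReal_mul (hfX_nonneg _)]
  have hmapW : W.map F = (volume.prod volume).restrict (Ioo (0:ℝ) 1 ×ˢ Ioo (0:ℝ) 1) := by
    rw [hWprod, hF, ← Measure.map_prod_map _ _ hFXc.measurable hFYc.measurable,
      hvX, hvY,
      cdf_map_eq fX FX hfX_nonneg hfX_int hfX_sum hFX hFXc hFXm,
      cdf_map_eq fY FY hfY_nonneg hfY_int hfY_sum hFY hFYc hFYm,
      Measure.prod_restrict]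
  have step4 : ∫ p, gc (F p) ∂W
      = ∫ u in Ioo (0:ℝ) 1 ×ˢ Ioo (0:ℝ) 1, gc u ∂(volume.prod volume) := by
    rw [← integral_map hF_meas.aemeasurable hgc_meas.aestronglyMeasurable, hmapW]
  have hae : (Ioo (0:ℝ) 1 ×ˢ Ioo (0:ℝ) 1 : Set (ℝ × ℝ))
      =ᵐ[volume.prod volume] (Icc (0:ℝ) 1 ×ˢ Icc (0:ℝ) 1 : Set (ℝ × ℝ)) := by
    rw [ae_eq_set]
    constructor
    · rw [diff_eq_empty.2 (Set.prod_mono Ioo_subset_Icc_self Ioo_subset_Icc_self)]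
      exact measure_empty
    · have hsub : (Icc (0:ℝ) 1 ×ˢ Icc (0:ℝ) 1 : Set (ℝ × ℝ))
          \ (Ioo (0:ℝ) 1 ×ˢ Ioo (0:ℝ) 1)
          ⊆ (({0, 1} : Set ℝ) ×ˢ (univ : Set ℝ)) ∪ ((univ : Set ℝ) ×ˢ ({0, 1} : Set ℝ)) := by
        rintro ⟨x, y⟩ ⟨⟨hx, hy⟩, hn⟩
        simp only [mem_prod, mem_Ioo, not_and_or, not_and, not_lt] at hn
        rcases hn with hn | hn
        · left
          refine ⟨?_, mem_univ _⟩
          rcases hn with hn | hn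
          · have hx0 : x = 0 := le_antisymm hn hx.1
            simp [hx0]
          · have hx1 : x = 1 := le_antisymm hx.2 hn
            simp [hx1]
        · right
          refine ⟨mem_univ _, ?_⟩
          rcases hn with hn | hn
          · have hy0 : y = 0 := le_antisymm hn hy.1
            simp [hy0]
          · have hy1 : y = 1 := le_antisymm hy.2 hn
            simp [hy1]
      refine measure_mono_null hsub (measure_union_null ?_ ?_)
      · rw [Measure.prod_prod,
          ((Set.finite_singleton (1:ℝ)).insert 0).measure_zero volume, zero_mul]
      · rw [Measure.prod_prod,
          ((Set.finite_singleton (1:ℝ)).insert 0).measure_zero volume, mul_zero]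
  have step5 : ∫ u in Ioo (0:ℝ) 1 ×ˢ Ioo (0:ℝ) 1, gc u ∂(volume.prod volume)
      = ∫ u in Icc (0:ℝ) 1 ×ˢ Icc (0:ℝ) 1, gc u ∂(volume.prod volume) :=
    setIntegral_congr_set hae
  have hA_val2 : ∫ p, A p ∂(volume.prod volume)
      = ∫ u in Icc (0:ℝ) 1 ×ˢ Icc (0:ℝ) 1, gc u ∂(volume.prod volume) := by
    rw [integral_congr_ae hA2, step2, step4, step5]
  rw [hsum_val, hA_val2, hB_val, hC_val]
  ring
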